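/- arXiv:2111.06759 — 3 statements merged into one kernel-verified Lean document; each statement's English description precedes it below -/
import Mathlib

section
/- Under the setup of the auxiliary-dynamics proposition with strict pre-impact velocity n(q_s)^⊤ v_s < 0, the endpoint velocity of the auxiliary ODE satisfies v(τ_r) = v_s − M(q_s)^{-1} n(q_s) D(q_s)^{-1} (n(q_s)^⊤ v_s). Moreover, v(τ_r) is the unique vector of the form v_s + M(q_s)^{-1} n(q_s) Λ with Λ ∈ ℝ such that n(q_s)^⊤ (v_s + M(q_s)^{-1} n(q_s) Λ) = 0, and this impulse satisfies Λ = ∫_{τ_s}^{τ_r} a_n dτ = −(n(q_s)^⊤ v_s)/D(q_s) > 0. That is, the auxiliary dynamics reproduces exactly the inelastic impact law with the correct contact impulse (Theorem 2, Part IV of the paper). -/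
open Matrix

/-- Under the setup of the auxiliary-dynamics proposition with strict pre-impact
velocity `n(q_s)ᵀ v_s < 0`, the endpoint velocity of the auxiliary ODE is
`v(τ_r) = v_s - M(q_s)⁻¹ n(q_s) D(q_s)⁻¹ (n(q_s)ᵀ v_s)`; it is the unique vector
of the form `v_s + M(q_s)⁻¹ n(q_s) Λ` with vanishing post-impact normal velocity,
and the impulse satisfies `Λ = ∫_{τ_s}^{τ_r} aₙ dτ = -(n(q_s)ᵀ v_s)/D(q_s) > 0`. -/
theorem stmt_2 (nq : ℕ) (hnq : 0 < nq)
    (fc : (Fin nq → ℝ) → ℝ) (hfc : ContDiff ℝ 2 fc)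
    (n : (Fin nq → ℝ) → Fin nq → ℝ)
    (hn : ∀ p w, fderiv ℝ fc p w = n p ⬝ᵥ w)
    (M : (Fin nq → ℝ) → Matrix (Fin nq) (Fin nq) ℝ)
    (hM : ∀ p, (M p).PosDef)
    (D : (Fin nq → ℝ) → ℝ)
    (hD : ∀ p, D p = n p ⬝ᵥ ((M p)⁻¹ *ᵥ n p))
    (qs vs : Fin nq → ℝ) (hfcqs : fc qs = 0) (hnqs : n qs ≠ 0)
    (hvs : n qs ⬝ᵥ vs < 0)
    (ts τs an : ℝ) (han : 0 < an)
    (τjump : ℝ) (hτjump : τjump = -(n qs ⬝ᵥ vs) / (D qs * an))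
    (τr : ℝ) (hτr : τr = τs + τjump)
    (q v : ℝ → Fin nq → ℝ) (t : ℝ → ℝ)
    (hq : ∀ τ ∈ Set.Icc τs τr, HasDerivWithinAt q (0 : Fin nq → ℝ) (Set.Icc τs τr) τ)
    (hv : ∀ τ ∈ Set.Icc τs τr,
      HasDerivWithinAt v (an • ((M (q τ))⁻¹ *ᵥ n (q τ))) (Set.Icc τs τr) τ)
    (ht : ∀ τ ∈ Set.Icc τs τr, HasDerivWithinAt t (0 : ℝ) (Set.Icc τs τr) τ)
    (hq0 : q τs = qs) (hv0 : v τs = vs) (ht0 : t τs = ts) :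
    v τr = vs - ((n qs ⬝ᵥ vs) / D qs) • ((M qs)⁻¹ *ᵥ n qs) ∧
    (∀ Λ : ℝ, n qs ⬝ᵥ (vs + Λ • ((M qs)⁻¹ *ᵥ n qs)) = 0 ↔
      Λ = -(n qs ⬝ᵥ vs) / D qs) ∧
    (∫ _τ in τs..τr, an) = -(n qs ⬝ᵥ vs) / D qs ∧
    0 < -(n qs ⬝ᵥ vs) / D qs := by

  have hnvs : 0 < -(n qs ⬝ᵥ vs) := by linarith
  have hDpos : 0 < D qs := by
    rw [hD]
    have h1 : ((M qs)⁻¹).PosDef := (hM qs).inv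
    simpa using h1.dotProduct_mulVec_pos hnqs
  have hDne : D qs ≠ 0 := ne_of_gt hDpos
  have hpos : 0 < -(n qs ⬝ᵥ vs) / D qs := div_pos hnvs hDpos
  have hjump : 0 < τjump := by
    rw [hτjump]; exact div_pos hnvs (mul_pos hDpos han)
  have hτsr : τs ≤ τr := by rw [hτr]; linarith
  have hkey : τjump * an = -(n qs ⬝ᵥ vs) / D qs := by
    rw [hτjump]; field_simp
  -- q is constant on [τs, τr]
  have hqc : ∀ τ ∈ Set.Icc τs τr, q τ = qs := by
    intro τ hτ
    have := constant_of_has_deriv_right_zero (f := q) (a := τs) (b := τr)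
      (fun x hx => (hq x hx).continuousWithinAt)
      (fun x hx => (hq x (Set.mem_Icc_of_Ico hx)).mono_of_mem_nhdsWithin
        (Icc_mem_nhdsGE_of_mem hx)) τ hτ
    rw [this, hq0]
  set c : Fin nq → ℝ := an • ((M qs)⁻¹ *ᵥ n qs) with hc
  have hvc : ∀ τ ∈ Set.Icc τs τr, v τ = vs + (τ - τs) • c := by
    have := eq_of_has_deriv_right_eq (f := v) (g := fun τ => vs + (τ - τs) • c)
      (f' := fun _ => c) (a := τs) (b := τr)
      (fun x hx => by
        have h := (hv x (Set.mem_Icc_of_Ico hx)).mono_of_mem_nhdsWithin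
          (Icc_mem_nhdsGE_of_mem hx)
        rwa [hqc x (Set.mem_Icc_of_Ico hx)] at h)
      (fun x hx => by
        have h : HasDerivAt (fun τ : ℝ => vs + (τ - τs) • c) ((1 : ℝ) • c) x :=
          (((hasDerivAt_id x).sub_const τs).smul_const c).const_add vs
        simpa using h.hasDerivWithinAt)
      (fun x hx => (hv x hx).continuousWithinAt)
      (by fun_prop)
      (by simp [hv0])
    intro τ hτ
    simpa using this τ hτ
  have hvr : v τr = vs + (τjump * an) • ((M qs)⁻¹ *ᵥ n qs) := by
    rw [hvc τr (Set.right_mem_Icc.2 hτsr), hτr, hc]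
    simp [smul_smul]
  refine ⟨?_, ?_, ?_, hpos⟩
  · rw [hvr, hkey, neg_div, neg_smul, sub_eq_add_neg]
  · intro Λ
    have hDot : n qs ⬝ᵥ (vs + Λ • ((M qs)⁻¹ *ᵥ n qs))
        = n qs ⬝ᵥ vs + Λ * D qs := by
      rw [dotProduct_add, dotProduct_smul, hD]
      simp [smul_eq_mul]
    rw [hDot]
    constructor
    · intro h
      field_simp
      linarith
    · intro h
      rw [h]
      field_simp
      ring
  · rw [intervalIntegral.integral_const, hτr, smul_eq_mul]
    simpa using hkey
end

section
/- Index reduction is exact: Let q, v : [0, T] → ℝ^{n_q} be differentiable with q'(t) = v(t) and v'(t) = f_v(q(t), v(t), u(t)) − M(q(t))^{-1} n(q(t)) D(q(t))^{-1} φ(x(t), u(t)) for a given function u, and suppose n(q(t)) ≠ 0 for all t ∈ [0, T]. If the initial value is consistently initialized, i.e., f_c(q(0)) = 0 and n(q(0))^⊤ v(0) = 0, then f_c(q(t)) = 0 and n(q(t))^⊤ v(t) = 0 for all t ∈ [0, T]. In other words, solutions of the index-reduced ODE (Eq. (19) of the paper) with consistent initialization satisfy the algebraic constraint of the index-3 DAE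 for all times. -/
open Matrix

/-- Index reduction is exact: solutions of the index-reduced ODE
`q' = v`, `v' = f_v(q,v,u) - M(q)⁻¹ n(q) D(q)⁻¹ φ(x,u)` with consistent
initialization (`f_c(q(0)) = 0`, `n(q(0))ᵀ v(0) = 0`) satisfy the algebraic
constraints `f_c(q(t)) = 0` and `n(q(t))ᵀ v(t) = 0` of the index-3 DAE for all
`t ∈ [0,T]`. -/
theorem stmt_7 (nq nu : ℕ) (hnq : 0 < nq)
    (fc : (Fin nq → ℝ) → ℝ) (hfc : ContDiff ℝ 2 fc)
    (n : (Fin nq → ℝ) → Fin nq → ℝ)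
    (hn : ∀ p w, fderiv ℝ fc p w = n p ⬝ᵥ w)
    (M : (Fin nq → ℝ) → Matrix (Fin nq) (Fin nq) ℝ)
    (hM : ∀ p, (M p).PosDef)
    (fv : (Fin nq → ℝ) → (Fin nq → ℝ) → (Fin nu → ℝ) → Fin nq → ℝ)
    (D : (Fin nq → ℝ) → ℝ)
    (hD : ∀ p, D p = n p ⬝ᵥ ((M p)⁻¹ *ᵥ n p))
    (φf : (Fin nq → ℝ) → (Fin nq → ℝ) → (Fin nu → ℝ) → ℝ)
    (hφ : ∀ p w uu, φf p w uu = n p ⬝ᵥ fv p w uu + fderiv ℝ (fun r => n r ⬝ᵥ w) p w)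
    (T : ℝ) (hT : 0 ≤ T)
    (q v : ℝ → Fin nq → ℝ) (u : ℝ → Fin nu → ℝ)
    (hq : ∀ t ∈ Set.Icc 0 T, HasDerivWithinAt q (v t) (Set.Icc 0 T) t)
    (hv : ∀ t ∈ Set.Icc 0 T,
      HasDerivWithinAt v
        (fv (q t) (v t) (u t) -
          (φf (q t) (v t) (u t) / D (q t)) • ((M (q t))⁻¹ *ᵥ n (q t)))
        (Set.Icc 0 T) t)
    (hnne : ∀ t ∈ Set.Icc 0 T, n (q t) ≠ 0)
    (hinit1 : fc (q 0) = 0) (hinit2 : n (q 0) ⬝ᵥ v 0 = 0) :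
    ∀ t ∈ Set.Icc 0 T, fc (q t) = 0 ∧ n (q t) ⬝ᵥ v t = 0 := by
  rcases eq_or_lt_of_le hT with hT0 | hTpos
  · intro t ht
    have ht0 : t = 0 := le_antisymm (hT0 ▸ ht.2) ht.1
    subst ht0
    exact ⟨hinit1, hinit2⟩
  set F := fderiv ℝ fc with hF
  have hF1 : ContDiff ℝ 1 F := hfc.fderiv_right (by norm_num)
  have hFd : Differentiable ℝ F := hF1.differentiable one_ne_zero
  have hDpos : ∀ t ∈ Set.Icc 0 T, 0 < D (q t) := by
    intro t ht
    rw [hD]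
    have h1 : ((M (q t))⁻¹).PosDef := (hM (q t)).inv
    simpa using h1.re_dotProduct_pos (hnne t ht)
  have key : ∀ t ∈ Set.Icc 0 T,
      HasDerivWithinAt (fun s => n (q s) ⬝ᵥ v s) 0 (Set.Icc 0 T) t := by
    intro t ht
    have hFq : HasDerivWithinAt (fun s => F (q s)) (fderiv ℝ F (q t) (v t))
        (Set.Icc 0 T) t :=
      (hFd (q t)).hasFDerivAt.comp_hasDerivWithinAt t (hq t ht)
    have happ := hFq.clm_apply (hv t ht)
    have heq : (fun s => F (q s) (v s)) = fun s => n (q s) ⬝ᵥ v s := by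
      funext s; exact hn (q s) (v s)
    rw [heq] at happ
    have hA : fderiv ℝ (fun r => n r ⬝ᵥ v t) (q t) (v t)
        = fderiv ℝ F (q t) (v t) (v t) := by
      have h1 : HasFDerivAt (fun r => F r (v t))
          ((fderiv ℝ F (q t)).flip (v t)) (q t) := by
        have := (hFd (q t)).hasFDerivAt.clm_apply (hasFDerivAt_const (v t) (q t))
        simpa using this
      have h2 : (fun r => F r (v t)) = fun r => n r ⬝ᵥ v t := by
        funext r; exact hn r (v t)
      rw [← h2, h1.fderiv]
      simp
    have hFv' : F (q t) (fv (q t) (v t) (u t) -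
          (φf (q t) (v t) (u t) / D (q t)) • ((M (q t))⁻¹ *ᵥ n (q t)))
        = n (q t) ⬝ᵥ fv (q t) (v t) (u t) - φf (q t) (v t) (u t) := by
      rw [hn, dotProduct_sub, dotProduct_smul, ← hD, smul_eq_mul,
        div_mul_cancel₀ _ (hDpos t ht).ne']
    refine happ.congr_deriv ?_
    rw [hFv', hA.symm]
    rw [hφ (q t) (v t) (u t)]
    ring
  have hg0 : ∀ t ∈ Set.Icc 0 T, n (q t) ⬝ᵥ v t = 0 := by
    have hconst := constant_of_derivWithin_zero
      (f := fun s => n (q s) ⬝ᵥ v s) (a := 0) (b := T)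
      (fun t ht => (key t ht).differentiableWithinAt)
      (fun t ht => (key t (Set.Ico_subset_Icc_self ht)).derivWithin
        ((uniqueDiffOn_Icc hTpos) t (Set.Ico_subset_Icc_self ht)))
    intro t ht
    simpa [hinit2] using hconst t ht
  have keyf : ∀ t ∈ Set.Icc 0 T,
      HasDerivWithinAt (fun s => fc (q s)) 0 (Set.Icc 0 T) t := by
    intro t ht
    have h := (hfc.differentiable two_ne_zero (q t)).hasFDerivAt.comp_hasDerivWithinAt
      t (hq t ht)
    have h0 : fderiv ℝ fc (q t) (v t) = 0 := by rw [hn]; exact hg0 t ht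
    rw [h0] at h
    exact h
  have hconst2 := constant_of_derivWithin_zero
    (f := fun s => fc (q s)) (a := 0) (b := T)
    (fun t ht => (keyf t ht).differentiableWithinAt)
    (fun t ht => (keyf t (Set.Ico_subset_Icc_self ht)).derivWithin
      ((uniqueDiffOn_Icc hTpos) t (Set.Ico_subset_Icc_self ht)))
  intro t ht
  exact ⟨by simpa [hinit1] using hconst2 t ht, hg0 t ht⟩
end

section
/- Contact breaking: Let u : [0, ε₀] → ℝ^{n_u} and y = (q, v, t) : [0, ε₀] → ℝ^{n_q} × ℝ^{n_q} × ℝ be such that y is differentiable and solves the unconstrained time-freezing dynamics q'(τ) = v(τ), v'(τ) = f_v(q(τ), v(τ), u(τ)), t'(τ) = 1, with the map τ ↦ φ(x(τ), u(τ)) continuous. Suppose the initial point lies on the switching surface, i.e., f_c(q(0)) = 0 and n(q(0))^⊤ v(0) = 0, and that φ(x(0), u(0)) > 0. Then there exists ε ∈ (0, ε₀] such that for all τ ∈ (0, ε): n(q(τ))^⊤ v(τ) > 0 and f_c(q(τ)) > 0. That is, when φ > 0 the trajectory immediately leaves the surface Σ into the region where the constraint is strictly satisfied (the contact breaks). -/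
open Matrix

/-- Contact breaking: along the unconstrained time-freezing dynamics
`q' = v`, `v' = f_v(q,v,u)`, `t' = 1`, started on the switching surface `Σ`
(`f_c(q(0)) = 0`, `n(q(0))ᵀv(0) = 0`) with `φ(x(0),u(0)) > 0` and
`τ ↦ φ(x(τ),u(τ))` continuous, there exists `ε ∈ (0, ε₀]` such that for all
`τ ∈ (0, ε)` the trajectory satisfies `n(q(τ))ᵀv(τ) > 0` and `f_c(q(τ)) > 0`:
the contact breaks. -/
theorem stmt_15 (nq nu : ℕ) (hnq : 0 < nq)
    (fc : (Fin nq → ℝ) → ℝ) (hfc : ContDiff ℝ 2 fc)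
    (n : (Fin nq → ℝ) → Fin nq → ℝ)
    (hn : ∀ p w, fderiv ℝ fc p w = n p ⬝ᵥ w)
    (fv : (Fin nq → ℝ) → (Fin nq → ℝ) → (Fin nu → ℝ) → Fin nq → ℝ)
    (ε₀ : ℝ) (hε₀ : 0 < ε₀)
    (u : ℝ → Fin nu → ℝ)
    (q v : ℝ → Fin nq → ℝ) (t : ℝ → ℝ)
    (hq : ∀ τ ∈ Set.Icc 0 ε₀, HasDerivWithinAt q (v τ) (Set.Icc 0 ε₀) τ)
    (hv : ∀ τ ∈ Set.Icc 0 ε₀,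
      HasDerivWithinAt v (fv (q τ) (v τ) (u τ)) (Set.Icc 0 ε₀) τ)
    (ht : ∀ τ ∈ Set.Icc 0 ε₀, HasDerivWithinAt t (1 : ℝ) (Set.Icc 0 ε₀) τ)
    (hφcont : ContinuousOn
      (fun τ => n (q τ) ⬝ᵥ fv (q τ) (v τ) (u τ) +
        fderiv ℝ (fun p => n p ⬝ᵥ v τ) (q τ) (v τ)) (Set.Icc 0 ε₀))
    (hinit1 : fc (q 0) = 0) (hinit2 : n (q 0) ⬝ᵥ v 0 = 0)
    (hφ0 : 0 < n (q 0) ⬝ᵥ fv (q 0) (v 0) (u 0) +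
      fderiv ℝ (fun p => n p ⬝ᵥ v 0) (q 0) (v 0)) :
    ∃ ε ∈ Set.Ioc 0 ε₀, ∀ τ ∈ Set.Ioo 0 ε,
      0 < n (q τ) ⬝ᵥ v τ ∧ 0 < fc (q τ) := by
  have hD : ContDiff ℝ 1 (fderiv ℝ fc) := hfc.fderiv_right (by norm_num)
  have hDdiff : Differentiable ℝ (fderiv ℝ fc) := hD.differentiable (by norm_num)
  have hfcdiff : Differentiable ℝ fc := hfc.differentiable (by norm_num)
  set g : ℝ → ℝ := fun τ => n (q τ) ⬝ᵥ v τ with hgdef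
  set Φ : ℝ → ℝ := fun τ => n (q τ) ⬝ᵥ fv (q τ) (v τ) (u τ) +
        fderiv ℝ (fun p => n p ⬝ᵥ v τ) (q τ) (v τ) with hΦdef
  have hgfun : g = fun y => fderiv ℝ fc (q y) (v y) := funext fun y => (hn _ _).symm
  have hΦeq : ∀ τ, Φ τ = (fderiv ℝ (fderiv ℝ fc) (q τ) (v τ)) (v τ) +
      fderiv ℝ fc (q τ) (fv (q τ) (v τ) (u τ)) := by
    intro τ
    have h1 : (fun p => n p ⬝ᵥ v τ) = fun p => fderiv ℝ fc p (v τ) :=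
      funext fun p => (hn p (v τ)).symm
    simp only [hΦdef, h1, ← hn]
    rw [fderiv_clm_apply (hDdiff (q τ)) (differentiableAt_const (v τ))]
    simp [add_comm]
  -- derivative of g
  have hgderiv : ∀ τ ∈ Set.Icc 0 ε₀, HasDerivWithinAt g (Φ τ) (Set.Icc 0 ε₀) τ := by
    intro τ hτ
    have h1 : HasDerivWithinAt (fun y => fderiv ℝ fc (q y))
        ((fderiv ℝ (fderiv ℝ fc) (q τ)) (v τ)) (Set.Icc 0 ε₀) τ :=
      (hDdiff (q τ)).hasFDerivAt.comp_hasDerivWithinAt τ (hq τ hτ)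
    have h2 := h1.clm_apply (hv τ hτ)
    rw [hΦeq τ, hgfun]
    exact h2
  -- derivative of fc ∘ q
  have hhderiv : ∀ τ ∈ Set.Icc 0 ε₀,
      HasDerivWithinAt (fun y => fc (q y)) (g τ) (Set.Icc 0 ε₀) τ := by
    intro τ hτ
    have := (hfcdiff (q τ)).hasFDerivAt.comp_hasDerivWithinAt τ (hq τ hτ)
    rwa [hn] at this
  -- choose ε
  have h0mem : (0:ℝ) ∈ Set.Icc 0 ε₀ := ⟨le_rfl, hε₀.le⟩
  have hev : ∀ᶠ τ in nhdsWithin 0 (Set.Icc 0 ε₀), 0 < Φ τ :=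
    (hφcont 0 h0mem).eventually (eventually_gt_nhds hφ0)
  rw [Filter.Eventually, Metric.mem_nhdsWithin_iff] at hev
  obtain ⟨δ, hδpos, hδ⟩ := hev
  set ε : ℝ := min δ ε₀ with hεdef
  have hεpos : 0 < ε := lt_min hδpos hε₀
  have hεε₀ : ε ≤ ε₀ := min_le_right _ _
  have hsub : Set.Icc 0 ε ⊆ Set.Icc 0 ε₀ := Set.Icc_subset_Icc le_rfl hεε₀
  have hΦpos : ∀ τ ∈ Set.Ioo 0 ε, 0 < Φ τ := by
    intro τ hτ
    have hτ' : τ ∈ Set.Icc 0 ε₀ := hsub ⟨hτ.1.le, hτ.2.le⟩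
    have : dist τ 0 < δ := by
      rw [Real.dist_eq, sub_zero, abs_of_pos hτ.1]
      exact hτ.2.trans_le (min_le_left _ _)
    exact hδ ⟨Metric.mem_ball.2 this, hτ'⟩
  have hIoo : ∀ τ ∈ Set.Ioo 0 ε, Set.Icc (0:ℝ) ε₀ ∈ nhds τ := fun τ hτ =>
    Icc_mem_nhds hτ.1 (hτ.2.trans_le hεε₀)
  -- g strictly monotone on [0, ε]
  have hgmono : StrictMonoOn g (Set.Icc 0 ε) := by
    apply strictMonoOn_of_deriv_pos (convex_Icc 0 ε)
    · exact fun τ hτ => ((hgderiv τ (hsub hτ)).continuousWithinAt).mono hsub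
    · intro τ hτ
      rw [interior_Icc] at hτ
      rw [((hgderiv τ (hsub ⟨hτ.1.le, hτ.2.le⟩)).hasDerivAt (hIoo τ hτ)).deriv]
      exact hΦpos τ hτ
  have hgpos : ∀ τ ∈ Set.Ioo 0 ε, 0 < g τ := by
    intro τ hτ
    have := hgmono (Set.left_mem_Icc.2 hεpos.le) ⟨hτ.1.le, hτ.2.le⟩ hτ.1
    rwa [show g 0 = 0 from hinit2] at this
  -- fc ∘ q strictly monotone on [0, ε]
  have hhmono : StrictMonoOn (fun y => fc (q y)) (Set.Icc 0 ε) := by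
    apply strictMonoOn_of_deriv_pos (convex_Icc 0 ε)
    · exact fun τ hτ => ((hhderiv τ (hsub hτ)).continuousWithinAt).mono hsub
    · intro τ hτ
      rw [interior_Icc] at hτ
      rw [((hhderiv τ (hsub ⟨hτ.1.le, hτ.2.le⟩)).hasDerivAt (hIoo τ hτ)).deriv]
      exact hgpos τ hτ
  refine ⟨ε, ⟨hεpos, hεε₀⟩, fun τ hτ => ⟨hgpos τ hτ, ?_⟩⟩
  have := hhmono (Set.left_mem_Icc.2 hεpos.le) ⟨hτ.1.le, hτ.2.le⟩ hτ.1
  simpa [hinit1] using this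
end
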